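/- arXiv:1504.00746 — 6 statements merged into one kernel-verified Lean document; each statement's English description precedes it below -/
import Mathlib

section
/- Let p = 2, N odd, r ≥ 2. The restriction of η_r to Φ_r² ∩ Γ⁰(2) is still surjective onto Γ/Γ_r, where Γ⁰(2) is the set of matrices in SL₂(ℤ) whose upper-right entry is even. -/
/- STATEMENT 1: The restriction of η_r to Φ_r² ∩ Γ⁰(2) (matrices with even upper-right entry)
is still surjective onto Γ/Γ_r.  Classes in Γ/Γ_r are represented by integers d ≡ 1 mod 4. -/
theorem stmt1 (N : ℕ) (hN : 0 < N) (hNodd : Odd N) (r : ℕ) (hr : 2 ≤ r)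
    (d : ℤ) (hd : d ≡ 1 [ZMOD 4]) :
    ∃ A : Matrix.SpecialLinearGroup (Fin 2) ℤ,
      ((N : ℤ) * 2 ^ r ∣ A.1 1 0) ∧
      A.1 0 0 ≡ 1 [ZMOD 4 * N] ∧
      A.1 1 1 ≡ 1 [ZMOD 4 * N] ∧
      (2 : ℤ) ∣ A.1 0 1 ∧
      A.1 1 1 ≡ d [ZMOD 2 ^ r] := by
  obtain ⟨u₀, hu₀⟩ : (4:ℤ) ∣ 1 - d := Int.ModEq.dvd hd
  have hcop2N : IsCoprime (2:ℤ) (N:ℤ) := by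
    have : Nat.Coprime 2 N := Nat.coprime_two_left.mpr hNodd
    exact_mod_cast Nat.isCoprime_iff_coprime.mpr this
  obtain ⟨a, b, hab⟩ : IsCoprime ((N:ℤ)) ((2:ℤ)^(r-2)) := (hcop2N.pow_left).symm
  set x' : ℤ := -(a*u₀) with hx'
  have hd'2 : IsCoprime (1 + 4*(N:ℤ)*x') 2 := by
    rw [show (1:ℤ) + 4*N*x' = 1 + 2*(2*N*x') by ring]
    exact (isCoprime_one_left).add_mul_left_left _
  have hd'N : IsCoprime (1 + 4*(N:ℤ)*x') (N:ℤ) := by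
    rw [show (1:ℤ) + 4*N*x' = 1 + N*(4*x') by ring]
    exact (isCoprime_one_left).add_mul_left_left _
  obtain ⟨u, v, huv⟩ : IsCoprime (1 + 4*(N:ℤ)*x') ((2:ℤ)^(r+1) * N) :=
    (hd'2.pow_right).mul_right hd'N
  rw [pow_succ] at huv
  have hr1 : (2:ℤ)^r = 2*2^(r-1) := by
    rw [← pow_succ']; congr 1; omega
  have hr2 : (2:ℤ)^r = 4*2^(r-2) := by
    rw [show (4:ℤ) = 2^2 by norm_num, ← pow_add]; congr 1; omega
  refine ⟨⟨!![u, -(2*v); 2^r*N, 1 + 4*N*x'], ?_⟩, ?_, ?_, ?_, ?_, ?_⟩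
  · rw [Matrix.det_fin_two_of]; linear_combination huv
  · exact ⟨1, by simp [mul_comm]⟩
  · show (u : ℤ) ≡ 1 [ZMOD 4*N]
    exact Int.modEq_iff_dvd.mpr ⟨v*2^(r-1) + u*x', by linear_combination (-1)*huv + 2*N*v*hr1⟩
  · show (1 + 4*(N:ℤ)*x') ≡ 1 [ZMOD 4*N]
    exact (Int.modEq_iff_dvd.mpr ⟨x', by ring⟩).symm
  · exact ⟨-v, by simp⟩
  · show (1 + 4*(N:ℤ)*x') ≡ d [ZMOD 2^r]
    refine (Int.modEq_iff_dvd.mpr ⟨u₀*b, ?_⟩).symm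
    linear_combination hu₀ - 4*u₀*hab - u₀*b*hr2
end

section
/- Let p = 2, N odd, and r ≥ s ≥ 2. Then Γ₁(N·2^r) is a normal subgroup of Φ_r^s := Γ₁(N·2^s) ∩ Γ₀(2^r), and the quotient Φ_r^s / Γ₁(N·2^r) is isomorphic to Γ_s/Γ_r ≅ ℤ/2^{r-s}ℤ via the map induced by sending a matrix to the class of its (2,2)-entry. -/
open CongruenceSubgroup Subgroup

lemma aux_pow (s k : ℕ) : ∃ t : ℤ, Odd t ∧ ((1:ℤ)+2^(s+2))^(2^k) = 1 + 2^(s+2+k)*t := by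
  induction k with
  | zero => exact ⟨1, odd_one, by ring⟩
  | succ k ih =>
    obtain ⟨t, ht, he⟩ := ih
    refine ⟨t + 2^(s+k+1)*t^2, ht.add_even (⟨2^(s+k)*t^2, by ring⟩), ?_⟩
    have : ((1:ℤ)+2^(s+2))^(2^(k+1)) = (((1:ℤ)+2^(s+2))^(2^k))^2 := by
      rw [← pow_mul]; ring_nf
    rw [this, he]; ring

lemma isCyclic_zpowers {G : Type*} [Group G] (g : G) : IsCyclic (zpowers g) := by
  refine ⟨⟨g, mem_zpowers g⟩, ?_⟩
  rintro ⟨x, hx⟩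
  obtain ⟨n, rfl⟩ := hx
  exact ⟨n, by ext; simp⟩

/- STATEMENT 2: For r ≥ s ≥ 2, Γ₁(N·2^r) is normal in Φ_r^s = Γ₁(N·2^s) ∩ Γ₀(2^r), and the
quotient is isomorphic to ℤ/2^{r-s}ℤ via the map induced by the (2,2)-entry. -/
theorem stmt2 (N : ℕ) (hN : 0 < N) (hNodd : Odd N) (r s : ℕ) (hs : 2 ≤ s) (hsr : s ≤ r) :
    Gamma1 (N * 2 ^ r) ≤ Gamma1 (N * 2 ^ s) ⊓ Gamma0 (2 ^ r) ∧
    ((Gamma1 (N * 2 ^ r)).subgroupOf (Gamma1 (N * 2 ^ s) ⊓ Gamma0 (2 ^ r))).Normal ∧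
    ∀ [inst : ((Gamma1 (N * 2 ^ r)).subgroupOf (Gamma1 (N * 2 ^ s) ⊓ Gamma0 (2 ^ r))).Normal],
    ∃ φ : (↥(Gamma1 (N * 2 ^ s) ⊓ Gamma0 (2 ^ r)) ⧸
        ((Gamma1 (N * 2 ^ r)).subgroupOf (Gamma1 (N * 2 ^ s) ⊓ Gamma0 (2 ^ r)))) ≃*
          Multiplicative (ZMod (2 ^ (r - s))),
      ∀ A B : ↥(Gamma1 (N * 2 ^ s) ⊓ Gamma0 (2 ^ r)),
        φ (QuotientGroup.mk A) = φ (QuotientGroup.mk B) ↔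
          ((A : Matrix.SpecialLinearGroup (Fin 2) ℤ).1 1 1 : ℤ) ≡
            ((B : Matrix.SpecialLinearGroup (Fin 2) ℤ).1 1 1 : ℤ) [ZMOD 2 ^ r] := by
  obtain ⟨s, rfl⟩ : ∃ s', s = s' + 2 := ⟨s - 2, by omega⟩
  obtain ⟨m, rfl⟩ : ∃ m, r = (s + 2) + m := ⟨r - (s+2), by omega⟩
  rw [show s + 2 + m - (s + 2) = m from by omega]
  set s' := s + 2 with hs'
  set r' := s + 2 + m with hr'
  have hsr' : s' ≤ r' := by omega
  -- basic facts
  have key1 : ∀ (n : ℕ) (x : ℤ), (x : ZMod n) = 1 ↔ (n:ℤ) ∣ 1 - x := by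
    intro n x
    rw [show (1 : ZMod n) = ((1:ℤ) : ZMod n) from by norm_cast, ZMod.intCast_eq_intCast_iff]
    exact Int.modEq_iff_dvd
  have key0 : ∀ (n : ℕ) (x : ℤ), (x : ZMod n) = 0 ↔ (n:ℤ) ∣ x :=
    fun n x => ZMod.intCast_zmod_eq_zero_iff_dvd x n
  have keyq : ∀ (n : ℕ) (x y : ℤ), (x : ZMod n) = (y : ZMod n) ↔ (n:ℤ) ∣ y - x := by
    intro n x y
    rw [ZMod.intCast_eq_intCast_iff]
    exact Int.modEq_iff_dvd
  have hN2 : ¬ (2 ∣ N) := by rcases hNodd with ⟨k, hk⟩; omega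
  have hcopN : ∀ k : ℕ, IsCoprime (N : ℤ) ((2:ℤ)^k) := by
    intro k
    have h2 : Nat.Coprime N (2^k) :=
      (Nat.Coprime.pow_right k ((Nat.Prime.coprime_iff_not_dvd Nat.prime_two).mpr hN2).symm)
    have := Nat.isCoprime_iff_coprime.mpr h2
    push_cast at this ⊢
    exact this
  have hdvd_mul : ∀ (x : ℤ), (N:ℤ) * 2^s' ∣ x → (2:ℤ)^r' ∣ x → (N:ℤ) * 2^r' ∣ x := by
    intro x h1 h2
    exact (hcopN r').mul_dvd (dvd_trans ⟨2^s', by push_cast; ring⟩ h1) h2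
  have hcast : ∀ (n : ℕ) (x : ℤ), ((N * 2^n : ℕ) : ℤ) = (N:ℤ) * 2^n → True := fun _ _ _ => trivial
  -- the inclusion
  have h₁ : Gamma1 (N * 2 ^ r') ≤ Gamma1 (N * 2 ^ s') ⊓ Gamma0 (2 ^ r') := by
    intro A hA
    rw [Gamma1_mem] at hA
    obtain ⟨ha, hd, hc⟩ := hA
    rw [key1] at ha hd; rw [key0] at hc
    push_cast at ha hd hc
    rw [Subgroup.mem_inf]
    constructor
    · rw [Gamma1_mem, key1, key1, key0]
      push_cast
      refine ⟨dvd_trans ?_ ha, dvd_trans ?_ hd, dvd_trans ?_ hc⟩ <;>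
        exact mul_dvd_mul_left _ (pow_dvd_pow 2 (by omega))
    · rw [Gamma0_mem, key0]
      push_cast
      exact dvd_trans (dvd_mul_left _ _) hc
  -- the homomorphism
  set Φ := Gamma1 (N * 2 ^ s') ⊓ Gamma0 (2 ^ r') with hΦ
  set f : ↥Φ →* (ZMod (2^r'))ˣ :=
    ((Gamma0Map (2^r')).comp (Subgroup.inclusion inf_le_right)).toHomUnits with hf
  have hfval : ∀ A : ↥Φ, ((f A : (ZMod (2^r'))ˣ) : ZMod (2^r'))
      = (((A : Matrix.SpecialLinearGroup (Fin 2) ℤ).1 1 1 : ℤ) : ZMod (2^r')) := fun A => rfl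
  -- kernel
  have hker : (Gamma1 (N * 2 ^ r')).subgroupOf Φ = f.ker := by
    ext A
    rw [Subgroup.mem_subgroupOf, MonoidHom.mem_ker, Gamma1_mem, Units.ext_iff, Units.val_one,
      hfval, key1, key1, key1, key0]
    obtain ⟨hA1, hA0⟩ := Subgroup.mem_inf.mp A.2
    rw [Gamma1_mem, key1, key1, key0] at hA1
    rw [Gamma0_mem, key0] at hA0
    obtain ⟨ha, hd, hc⟩ := hA1
    push_cast at ha hd hc hA0 ⊢
    set a := ((A : Matrix.SpecialLinearGroup (Fin 2) ℤ).1 0 0 : ℤ) with hsa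
    set b := ((A : Matrix.SpecialLinearGroup (Fin 2) ℤ).1 0 1 : ℤ) with hsb
    set c := ((A : Matrix.SpecialLinearGroup (Fin 2) ℤ).1 1 0 : ℤ) with hsc
    set d := ((A : Matrix.SpecialLinearGroup (Fin 2) ℤ).1 1 1 : ℤ) with hsd
    have hdet : a * d - b * c = 1 := by
      have h2 := (A : Matrix.SpecialLinearGroup (Fin 2) ℤ).2
      rw [Matrix.det_fin_two] at h2
      exact h2
    constructor
    · rintro ⟨-, hdr', -⟩
      exact dvd_trans (dvd_mul_left _ _) hdr'
    · intro hdr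
      have hdr' : (N:ℤ) * 2^r' ∣ 1 - d := hdvd_mul _ hd hdr
      have hcr' : (N:ℤ) * 2^r' ∣ c := hdvd_mul _ hc hA0
      refine ⟨?_, hdr', hcr'⟩
      have h1 : (N:ℤ) * 2^r' ∣ 1 - a * d := by
        have he : 1 - a * d = -(b * c) := by linarith [hdet]
        rw [he]
        exact dvd_neg.mpr (hcr'.mul_left b)
      have he2 : 1 - a = (1 - a * d) - a * (1 - d) := by ring
      rw [he2]
      exact dvd_sub h1 (hdr'.mul_left a)
  -- instances
  haveI : NeZero (2^r') := ⟨pow_ne_zero _ two_ne_zero⟩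
  haveI : NeZero (2^s') := ⟨pow_ne_zero _ two_ne_zero⟩
  -- the generator u
  have hcop_u : Nat.Coprime (1 + 2^s') (2^r') := by
    refine Nat.Coprime.pow_right _ ?_
    have h2 : ¬ (2 ∣ 1 + 2^s') := by
      intro h
      have : (2:ℕ) ∣ 2^s' := dvd_pow_self 2 (by omega)
      omega
    exact ((Nat.Prime.coprime_iff_not_dvd Nat.prime_two).mpr h2).symm
  set u : (ZMod (2^r'))ˣ := ZMod.unitOfCoprime _ hcop_u with hu
  have huz : (u : ZMod (2^r')) = (((1 + 2^(s+2) : ℤ)) : ZMod (2^r')) := by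
    rw [hu, ZMod.coe_unitOfCoprime]
    push_cast
    rw [hs']
  -- order of u
  have hord : orderOf u = 2^m := by
    have hdvd : orderOf u ∣ 2^m := by
      apply orderOf_dvd_of_pow_eq_one
      ext
      rw [Units.val_pow_eq_pow_val, huz, Units.val_one, ← Int.cast_pow]
      obtain ⟨t, ht, he⟩ := aux_pow s m
      rw [he]
      push_cast
      rw [show ((2:ZMod (2^r')))^(s+2+m) = ((2^r' : ℕ) : ZMod (2^r')) from by push_cast; rw [hr'],
        ZMod.natCast_self]
      ring
    obtain ⟨j, hj, hju⟩ := (Nat.dvd_prime_pow Nat.prime_two).mp hdvd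
    rcases Nat.lt_or_ge j m with hjm | hjm
    · exfalso
      obtain ⟨m', hm'⟩ : ∃ m', m = m' + 1 := ⟨m - 1, by omega⟩
      have h1 : u ^ (2^m') = 1 := by
        apply orderOf_dvd_iff_pow_eq_one.mp
        rw [hju]
        exact pow_dvd_pow 2 (by omega)
      obtain ⟨t, ht, he⟩ := aux_pow s m'
      have hthis : ((((1 + 2^(s+2) : ℤ))^(2^m') : ℤ) : ZMod (2^r')) = 1 := by
        rw [Int.cast_pow, ← huz, ← Units.val_pow_eq_pow_val, h1, Units.val_one]
      rw [he] at hthis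
      have h0 : (((2:ℤ)^(s+2+m') * t : ℤ) : ZMod (2^r')) = 0 := by
        push_cast at hthis ⊢
        linear_combination hthis
      rw [key0] at h0
      push_cast at h0
      have hps : ((2:ℤ)^(s+2+m')) * 2 ∣ 2^(s+2+m') * t := by
        have : ((2:ℤ)^(s+2+m')) * 2 = 2^r' := by rw [hr', hm']; ring
        rw [this]
        exact h0
      have h2t : (2:ℤ) ∣ t :=
        (mul_dvd_mul_iff_left (a := (2:ℤ)^(s+2+m')) (by positivity)).mp hps
      rcases ht with ⟨l, hl⟩
      rcases h2t with ⟨k, hk⟩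
      omega
    · rw [hju, show j = m from by omega]
  -- the subgroup H
  have hdvdsr : (2:ℕ)^s' ∣ 2^r' := pow_dvd_pow 2 hsr'
  set H : Subgroup (ZMod (2^r'))ˣ := (ZMod.unitsMap hdvdsr).ker with hH
  have hu_mem : u ∈ H := by
    rw [hH, MonoidHom.mem_ker]
    ext
    rw [ZMod.unitsMap_def, Units.coe_map, Units.val_one]
    show (ZMod.castHom hdvdsr (ZMod (2^s'))) ((u : ZMod (2^r'))) = 1
    rw [huz, map_intCast, key1]
    push_cast
    rw [hs']
    exact ⟨-1, by ring⟩
  have hsurj := ZMod.unitsMap_surjective hdvdsr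
  have hcard1 : Nat.card (ZMod (2^r'))ˣ = 2^(r'-1) := by
    rw [Nat.card_eq_fintype_card, ZMod.card_units_eq_totient,
      Nat.totient_prime_pow Nat.prime_two (by omega)]
    simp
  have hcard2 : Nat.card (ZMod (2^s'))ˣ = 2^(s'-1) := by
    rw [Nat.card_eq_fintype_card, ZMod.card_units_eq_totient,
      Nat.totient_prime_pow Nat.prime_two (by omega)]
    simp
  have hq : Nat.card ((ZMod (2^r'))ˣ ⧸ H) = 2^(s'-1) := by
    rw [hH, Nat.card_congr (QuotientGroup.quotientKerEquivRange (ZMod.unitsMap hdvdsr)).toEquiv]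
    have hrt : (ZMod.unitsMap hdvdsr).range = ⊤ := by
      rw [MonoidHom.range_eq_top]
      exact hsurj
    rw [hrt, Subgroup.card_top, hcard2]
  have hcardH : Nat.card H = 2^m := by
    have htot := Subgroup.card_eq_card_quotient_mul_card_subgroup H
    rw [hcard1, hq] at htot
    have hsplit : (2:ℕ)^(r'-1) = 2^(s'-1) * 2^m := by
      rw [← pow_add]
      congr 1
      omega
    rw [hsplit] at htot
    exact (Nat.eq_of_mul_eq_mul_left (by positivity) htot).symm
  have hzp : Subgroup.zpowers u = H := by
    apply Subgroup.eq_of_le_of_card_ge (Subgroup.zpowers_le.mpr hu_mem)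
    rw [hcardH, Nat.card_zpowers, hord]
  -- range of f
  have hd1s : ∀ A : ↥Φ, (N:ℤ) * 2^s' ∣ 1 - ((A : Matrix.SpecialLinearGroup (Fin 2) ℤ).1 1 1 : ℤ) := by
    intro A
    obtain ⟨hA1, -⟩ := Subgroup.mem_inf.mp A.2
    rw [Gamma1_mem] at hA1
    have := hA1.2.1
    rw [key1] at this
    push_cast at this
    exact this
  have hrange : f.range = H := by
    apply le_antisymm
    · rintro x ⟨A, rfl⟩
      rw [hH, MonoidHom.mem_ker]
      ext
      rw [ZMod.unitsMap_def, Units.coe_map, Units.val_one]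
      show (ZMod.castHom hdvdsr (ZMod (2^s'))) ((f A : ZMod (2^r'))) = 1
      rw [hfval, map_intCast, key1]
      push_cast
      exact dvd_trans (dvd_mul_left _ _) (hd1s A)
    · intro x hx
      set dx : ℤ := ((x : ZMod (2^r')).val : ℤ) with hdx
      have hxdx : ((dx : ℤ) : ZMod (2^r')) = (x : ZMod (2^r')) := by
        rw [hdx, Int.cast_natCast, ZMod.natCast_val, ZMod.cast_id]
      have hdx1 : (2:ℤ)^s' ∣ 1 - dx := by
        have hx1 : (ZMod.castHom hdvdsr (ZMod (2^s'))) ((x : ZMod (2^r'))) = 1 := by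
          rw [hH, MonoidHom.mem_ker] at hx
          have h2 := congrArg (Units.val) hx
          rw [ZMod.unitsMap_def, Units.coe_map, Units.val_one] at h2
          exact h2
        have h3 : ((dx : ℤ) : ZMod (2^s')) = 1 := by
          rw [← map_intCast (ZMod.castHom hdvdsr (ZMod (2^s'))) dx, hxdx, hx1]
        rw [key1] at h3
        push_cast at h3
        exact h3
      obtain ⟨α, β, hαβ⟩ := hcopN r'
      set d' : ℤ := dx * (α * N) + β * 2^r' with hd'
      have hd'x : (2:ℤ)^r' ∣ d' - dx := ⟨β * (1 - dx), by linear_combination dx * hαβ⟩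
      have hd'N : (N:ℤ) ∣ d' - 1 := ⟨α * (dx - 1), by linear_combination hαβ⟩
      have hd's : (N:ℤ) * 2^s' ∣ 1 - d' := by
        apply (hcopN s').mul_dvd
        · rcases hd'N with ⟨k, hk⟩
          exact ⟨-k, by linarith⟩
        · have h4 : (1:ℤ) - d' = (1 - dx) - (d' - dx) := by ring
          rw [h4]
          exact dvd_sub hdx1 (dvd_trans (pow_dvd_pow 2 hsr') hd'x)
      have hcop_d : IsCoprime d' ((N:ℤ) * 2^r') := by
        apply IsCoprime.mul_right
        · rcases hd'N with ⟨k, hk⟩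
          have h5 : d' = 1 + (N:ℤ) * k := by linarith
          rw [h5]
          exact (isCoprime_one_left).add_mul_left_left k
        · rcases hd'x with ⟨k, hk⟩
          have h6 : d' = dx + 2^r' * k := by linarith
          rw [h6]
          apply IsCoprime.add_mul_left_left _ k
          have h7 := ZMod.val_coe_unit_coprime x
          have h8 := Nat.isCoprime_iff_coprime.mpr h7
          push_cast at h8
          exact h8
      obtain ⟨aa, bb, hab⟩ := hcop_d
      have hdet : (!![aa, -bb; (N:ℤ)*2^r', d'] : Matrix (Fin 2) (Fin 2) ℤ).det = 1 := by
        rw [Matrix.det_fin_two_of]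
        linear_combination hab
      set Msl : Matrix.SpecialLinearGroup (Fin 2) ℤ := ⟨!![aa, -bb; (N:ℤ)*2^r', d'], hdet⟩
        with hMsl
      have hM00 : (Msl 0 0 : ℤ) = aa := by simp [hMsl]
      have hM11 : (Msl 1 1 : ℤ) = d' := by simp [hMsl]
      have hM10 : (Msl 1 0 : ℤ) = (N:ℤ)*2^r' := by simp [hMsl]
      have haa : (N:ℤ) * 2^s' ∣ 1 - aa := by
        have h10 : (1:ℤ) - aa = -(aa * (1 - d')) + bb * ((N:ℤ)*2^r') := by
          linear_combination -hab
        rw [h10]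
        exact dvd_add (dvd_neg.mpr (hd's.mul_left aa))
          ((mul_dvd_mul_left (N:ℤ) (pow_dvd_pow 2 hsr')).mul_left bb)
      have hmem : Msl ∈ Φ := by
        rw [hΦ, Subgroup.mem_inf]
        constructor
        · rw [Gamma1_mem, key1, key1, key0]
          push_cast
          rw [hM00, hM11, hM10]
          refine ⟨haa, hd's, ?_⟩
          exact mul_dvd_mul_left _ (pow_dvd_pow 2 hsr')
        · rw [Gamma0_mem, key0]
          push_cast
          rw [hM10]
          exact Dvd.dvd.mul_left dvd_rfl (N:ℤ)
      refine ⟨⟨Msl, hmem⟩, ?_⟩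
      ext
      rw [hfval]
      show ((Msl 1 1 : ℤ) : ZMod (2^r')) = (x : ZMod (2^r'))
      rw [hM11, ← hxdx, keyq]
      rcases hd'x with ⟨k, hk⟩
      exact ⟨-k, by push_cast; linarith⟩
  -- assembly
  have hnormal : ((Gamma1 (N * 2 ^ r')).subgroupOf Φ).Normal := by
    rw [hker]
    exact f.normal_ker
  refine ⟨h₁, hnormal, ?_⟩
  intro inst
  haveI := inst
  have e : (↥Φ ⧸ (Gamma1 (N * 2 ^ r')).subgroupOf Φ) ≃* f.range :=
    (QuotientGroup.quotientMulEquivOfEq hker).trans (QuotientGroup.quotientKerEquivRange f)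
  have hcy : IsCyclic (↥Φ ⧸ (Gamma1 (N * 2 ^ r')).subgroupOf Φ) := by
    have hcr : IsCyclic f.range := by
      rw [hrange, ← hzp]
      exact _root_.isCyclic_zpowers u
    exact isCyclic_of_surjective e.symm e.symm.surjective
  have hcardQ : Nat.card (↥Φ ⧸ (Gamma1 (N * 2 ^ r')).subgroupOf Φ) = 2^m := by
    rw [Nat.card_congr e.toEquiv, hrange, hcardH]
  have main : ∀ (ψ : (↥Φ ⧸ (Gamma1 (N * 2 ^ r')).subgroupOf Φ) ≃* Multiplicative (ZMod (2^m)))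
      (A B : ↥Φ), ψ (QuotientGroup.mk A) = ψ (QuotientGroup.mk B) ↔
        ((A : Matrix.SpecialLinearGroup (Fin 2) ℤ).1 1 1 : ℤ) ≡
          ((B : Matrix.SpecialLinearGroup (Fin 2) ℤ).1 1 1 : ℤ) [ZMOD 2 ^ r'] := by
    intro ψ A B
    rw [EmbeddingLike.apply_eq_iff_eq, QuotientGroup.eq, hker, MonoidHom.mem_ker, map_mul,
      map_inv, inv_mul_eq_one, Units.ext_iff, hfval, hfval, ZMod.intCast_eq_intCast_iff]
    constructor
    · intro h
      exact_mod_cast h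
    · intro h
      exact_mod_cast h
  exact ⟨hcardQ ▸ (zmodCyclicMulEquiv hcy).symm, fun A B => main _ A B⟩
end

section
/- Let p = 2, N odd, r ≥ s ≥ 2, t = diag(1,2). Then t⁻¹ Φ_r^s t ∩ Φ_r^s = Φ_r^s ∩ Γ⁰(2), and Φ_r^s ∩ t Φ_r^s t⁻¹ = Φ_{r+1}^s, where intersections are taken inside GL₂(ℚ). -/
open Matrix CongruenceSubgroup

/- STATEMENT 6: For t = diag(1,2) and Φ_r^s = Γ₁(N·2^s) ∩ Γ₀(2^r) ⊆ SL₂(ℤ), inside GL₂(ℚ):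
t⁻¹Φ_r^s t ∩ Φ_r^s = Φ_r^s ∩ Γ⁰(2)  and  Φ_r^s ∩ tΦ_r^s t⁻¹ = Φ_{r+1}^s. -/
lemma memPhi_iff (n m : ℕ) (A : Matrix.SpecialLinearGroup (Fin 2) ℤ) :
    A ∈ Gamma1 n ⊓ Gamma0 m ↔
      (n : ℤ) ∣ A.1 0 0 - 1 ∧ (n : ℤ) ∣ A.1 1 1 - 1 ∧ (n : ℤ) ∣ A.1 1 0 ∧ (m : ℤ) ∣ A.1 1 0 := by
  rw [Subgroup.mem_inf, Gamma1_mem, Gamma0_mem]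
  simp only [← ZMod.intCast_zmod_eq_zero_iff_dvd, Int.cast_sub, Int.cast_one, sub_eq_zero]
  tauto

def mk2 (a b c d : ℤ) (h : a * d - b * c = 1) : Matrix.SpecialLinearGroup (Fin 2) ℤ :=
  ⟨!![a, b; c, d], by simpa [Matrix.det_fin_two_of] using h⟩

lemma tinv : (!![1, 0; 0, 2] : Matrix (Fin 2) (Fin 2) ℚ)⁻¹ = !![1, 0; 0, 1/2] := by
  apply Matrix.inv_eq_right_inv
  ext i j; fin_cases i <;> fin_cases j <;> simp [Matrix.mul_apply, Fin.sum_univ_two] <;> norm_num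

lemma conj1 (M : Matrix (Fin 2) (Fin 2) ℚ) :
    (!![1, 0; 0, 2] : Matrix (Fin 2) (Fin 2) ℚ)⁻¹ * M * !![1, 0; 0, 2]
      = !![M 0 0, 2 * M 0 1; M 1 0 / 2, M 1 1] := by
  rw [tinv]
  ext i j; fin_cases i <;> fin_cases j <;> simp [Matrix.mul_apply, Matrix.vecMul, dotProduct, Fin.sum_univ_two] <;> ring

lemma conj2 (M : Matrix (Fin 2) (Fin 2) ℚ) :
    !![1, 0; 0, 2] * M * (!![1, 0; 0, 2] : Matrix (Fin 2) (Fin 2) ℚ)⁻¹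
      = !![M 0 0, M 0 1 / 2; 2 * M 1 0, M 1 1] := by
  rw [tinv]
  ext i j; fin_cases i <;> fin_cases j <;> simp [Matrix.mul_apply, Matrix.vecMul, dotProduct, Fin.sum_univ_two] <;> ring

lemma mk2_coe (a b c d : ℤ) (h : a * d - b * c = 1) : (mk2 a b c d h).1 = !![a, b; c, d] := rfl

theorem stmt6 (N : ℕ) (hN : 0 < N) (hNodd : Odd N) (r s : ℕ) (hs : 2 ≤ s) (hsr : s ≤ r) :
    let ι : Matrix.SpecialLinearGroup (Fin 2) ℤ → Matrix (Fin 2) (Fin 2) ℚ :=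
      fun A => A.1.map (Int.cast : ℤ → ℚ)
    let t : Matrix (Fin 2) (Fin 2) ℚ := !![1, 0; 0, 2]
    ({M | ∃ A ∈ Gamma1 (N * 2 ^ s) ⊓ Gamma0 (2 ^ r), M = t⁻¹ * ι A * t} ∩
        (ι '' {A | A ∈ Gamma1 (N * 2 ^ s) ⊓ Gamma0 (2 ^ r)})
      = ι '' {A | A ∈ Gamma1 (N * 2 ^ s) ⊓ Gamma0 (2 ^ r) ∧ (2 : ℤ) ∣ A.1 0 1}) ∧
    ((ι '' {A | A ∈ Gamma1 (N * 2 ^ s) ⊓ Gamma0 (2 ^ r)}) ∩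
        {M | ∃ A ∈ Gamma1 (N * 2 ^ s) ⊓ Gamma0 (2 ^ r), M = t * ι A * t⁻¹}
      = ι '' {A | A ∈ Gamma1 (N * 2 ^ s) ⊓ Gamma0 (2 ^ (r + 1))}) := by
  intro ι t
  have hι : ∀ (A : Matrix.SpecialLinearGroup (Fin 2) ℤ) (i j : Fin 2),
      ι A i j = (A.1 i j : ℚ) := fun A i j => rfl
  constructor
  · ext M
    simp only [Set.mem_inter_iff, Set.mem_setOf_eq, Set.mem_image]
    constructor
    · rintro ⟨⟨A, hA, rfl⟩, B, hB, hMB⟩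
      refine ⟨B, ⟨hB, ?_⟩, hMB⟩
      have h01 := congrFun (congrFun (hMB.trans (conj1 (ι A))) 0) 1
      simp only [hι, Matrix.cons_val', Matrix.cons_val_zero, Matrix.cons_val_one,
        Matrix.head_cons, Matrix.empty_val', Matrix.cons_val_fin_one, Matrix.head_fin_const,
        Matrix.of_apply] at h01
      have : B.1 0 1 = 2 * A.1 0 1 := by exact_mod_cast h01
      exact ⟨A.1 0 1, this⟩
    · rintro ⟨B, ⟨hB, hdvd⟩, rfl⟩
      obtain ⟨k, hk⟩ := hdvd
      obtain ⟨h1, h2, h3, h4⟩ := (memPhi_iff _ _ B).mp hB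
      have hdet : B.1 0 0 * B.1 1 1 - B.1 0 1 * B.1 1 0 = 1 := by
        have := B.2; rwa [Matrix.det_fin_two] at this
      refine ⟨⟨mk2 (B.1 0 0) k (2 * B.1 1 0) (B.1 1 1) (by rw [hk] at hdet; linear_combination hdet), ?_, ?_⟩, ⟨B, hB, rfl⟩⟩
      · rw [memPhi_iff]
        exact ⟨h1, h2, h3.mul_left 2, h4.mul_left 2⟩
      · rw [conj1]
        ext i j
        fin_cases i <;> fin_cases j <;>
          simp [hι, mk2_coe, hk] <;> push_cast <;> ring
  · ext M
    simp only [Set.mem_inter_iff, Set.mem_setOf_eq, Set.mem_image]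
    constructor
    · rintro ⟨⟨B, hB, rfl⟩, A, hA, hMA⟩
      obtain ⟨h1, h2, h3, h4⟩ := (memPhi_iff _ _ B).mp hB
      obtain ⟨h1', h2', h3', h4'⟩ := (memPhi_iff _ _ A).mp hA
      refine ⟨B, ?_, rfl⟩
      have h10 := congrFun (congrFun (hMA.trans (conj2 (ι A))) 1) 0
      simp only [hι, Matrix.cons_val', Matrix.cons_val_zero, Matrix.cons_val_one,
        Matrix.head_cons, Matrix.empty_val', Matrix.cons_val_fin_one, Matrix.head_fin_const,
        Matrix.of_apply] at h10
      have hB10 : B.1 1 0 = 2 * A.1 1 0 := by exact_mod_cast h10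
      rw [memPhi_iff]
      refine ⟨h1, h2, h3, ?_⟩
      obtain ⟨c, hc⟩ := h4'
      refine ⟨c, ?_⟩
      rw [hB10, hc]; push_cast; ring
    · rintro ⟨B, hB, rfl⟩
      obtain ⟨h1, h2, h3, h4⟩ := (memPhi_iff _ _ B).mp hB
      obtain ⟨k, hk⟩ := h4
      push_cast at hk
      have hBmem : B ∈ Gamma1 (N * 2 ^ s) ⊓ Gamma0 (2 ^ r) := by
        rw [memPhi_iff]
        refine ⟨h1, h2, h3, ⟨2 * k, by rw [hk]; push_cast; ring⟩⟩
      have hdet : B.1 0 0 * B.1 1 1 - B.1 0 1 * B.1 1 0 = 1 := by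
        have := B.2; rwa [Matrix.det_fin_two] at this
      have hodd : ¬ (2 : ℤ) ∣ (N : ℤ) := by
        have := Nat.odd_iff.mp hNodd; omega
      have hcop : IsCoprime ((2 : ℤ) ^ (r + 1)) (N : ℤ) :=
        IsCoprime.pow_left ((Int.prime_two.coprime_iff_not_dvd).mpr hodd)
      have hNk : (N : ℤ) ∣ k := by
        have hNc : (N : ℤ) ∣ (2 : ℤ) ^ (r + 1) * k := by
          rw [← hk]
          exact dvd_trans ⟨(2 : ℤ) ^ s, by push_cast; ring⟩ h3
        exact hcop.symm.dvd_of_dvd_mul_left hNc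
      obtain ⟨j, hj⟩ := hNk
      refine ⟨⟨B, hBmem, rfl⟩,
        mk2 (B.1 0 0) (2 * B.1 0 1) (2 ^ r * k) (B.1 1 1)
          (by rw [hk] at hdet; linear_combination hdet), ?_, ?_⟩
      · rw [memPhi_iff, mk2_coe]
        simp only [Matrix.cons_val', Matrix.cons_val_zero, Matrix.cons_val_one,
          Matrix.head_cons, Matrix.empty_val', Matrix.cons_val_fin_one, Matrix.head_fin_const,
          Matrix.of_apply]
        refine ⟨h1, h2, ?_, ⟨k, by push_cast; ring⟩⟩
        refine ⟨2 ^ (r - s) * j, ?_⟩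
        have hpr : (2 : ℤ) ^ r = 2 ^ s * 2 ^ (r - s) := by
          rw [← pow_add, Nat.add_sub_cancel' hsr]
        rw [hj, hpr]; push_cast; ring
      · rw [conj2]
        ext i j'
        fin_cases i <;> fin_cases j' <;>
          simp [hι, mk2_coe, hk] <;> push_cast <;> ring
end

section
/- Let p = 2, N odd, r ≥ s ≥ 2. The matrices α_i = (1 i; 0 1) for i = 0, 1 form a complete set of left coset representatives for the subgroup Φ_r^s ∩ Γ⁰(2) in Φ_r^s; in particular [Φ_r^s : Φ_r^s ∩ Γ⁰(2)] = 2. -/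
open Matrix CongruenceSubgroup

/- STATEMENT 7: The matrices α_i = (1 i; 0 1), i = 0,1, form a complete set of left coset
representatives for Φ_r^s ∩ Γ⁰(2) in Φ_r^s = Γ₁(N·2^s) ∩ Γ₀(2^r). -/
theorem stmt7 (N : ℕ) (hN : 0 < N) (hNodd : Odd N) (r s : ℕ) (hs : 2 ≤ s) (hsr : s ≤ r) :
    let α : Fin 2 → Matrix.SpecialLinearGroup (Fin 2) ℤ :=
      fun i => ⟨!![1, (i : ℤ); 0, 1], by simp [Matrix.det_fin_two_of]⟩
    ∀ A ∈ Gamma1 (N * 2 ^ s) ⊓ Gamma0 (2 ^ r),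
      ∃! i : Fin 2, (α i)⁻¹ * A ∈ Gamma1 (N * 2 ^ s) ⊓ Gamma0 (2 ^ r) ∧
        (2 : ℤ) ∣ ((α i)⁻¹ * A).1 0 1 := by
  intro α A hA
  obtain ⟨hA1, hA0⟩ := hA
  have hA1' := (Gamma1_mem _ _).mp hA1
  have hA0' := (Gamma0_mem (N := 2 ^ r)).mp hA0
  have hB : ∀ i : Fin 2, ((α i)⁻¹ * A).1 =
      !![A.1 0 0 - (i:ℤ) * A.1 1 0, A.1 0 1 - (i:ℤ) * A.1 1 1; A.1 1 0, A.1 1 1] := by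
    intro i
    rw [Matrix.SpecialLinearGroup.coe_mul, Matrix.SpecialLinearGroup.coe_inv, Matrix.adjugate_fin_two]
    ext x y
    fin_cases x <;> fin_cases y <;>
      simp [α, Matrix.mul_apply, Fin.sum_univ_two] <;> ring
  have hE : ∀ i : Fin 2, ((α i)⁻¹ * A).1 0 1 = A.1 0 1 - (i:ℤ) * A.1 1 1 := by
    intro i; rw [hB i]; simp
  have hd : ((N * 2 ^ s : ℕ) : ℤ) ∣ A.1 1 1 - 1 := by
    have h1 : ((A.1 1 1 : ℤ) : ZMod (N * 2 ^ s)) = ((1 : ℤ) : ZMod (N * 2 ^ s)) := by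
      simpa using hA1'.2.1
    exact ((ZMod.intCast_eq_intCast_iff _ _ _).mp h1).symm.dvd
  have h2n : (2 : ℤ) ∣ ((N * 2 ^ s : ℕ) : ℤ) := by
    push_cast
    exact Dvd.dvd.mul_left (dvd_pow_self 2 (by omega)) _
  have hdodd : ¬ (2 : ℤ) ∣ A.1 1 1 := by
    rcases h2n.trans hd with ⟨k, hk⟩
    omega
  obtain ⟨t, ht⟩ : Odd (A.1 1 1) := Int.not_even_iff_odd.mp (fun h => hdodd h.two_dvd)
  have hmem : ∀ i : Fin 2, (α i)⁻¹ * A ∈ Gamma1 (N * 2 ^ s) ⊓ Gamma0 (2 ^ r) := by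
    intro i
    rw [Subgroup.mem_inf]
    constructor
    · rw [Gamma1_mem]
      have hc0 : ((A.1 1 0 : ℤ) : ZMod (N * 2 ^ s)) = 0 := hA1'.2.2
      refine ⟨?_, ?_, ?_⟩ <;> rw [hB i] <;>
        push_cast <;> simp [hc0, hA1'.1, hA1'.2.1]
    · rw [Gamma0_mem]
      rw [hB i]
      simpa using hA0'
  rcases Int.even_or_odd (A.1 0 1) with ⟨m, hm⟩ | ⟨m, hm⟩
  · refine ⟨0, ⟨hmem 0, ?_⟩, ?_⟩
    · rw [hE 0]; exact ⟨m, by push_cast; omega⟩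
    · rintro j ⟨-, hj⟩
      rw [hE j] at hj
      rcases hj with ⟨k, hk⟩
      fin_cases j <;> simp_all <;> omega
  · refine ⟨1, ⟨hmem 1, ?_⟩, ?_⟩
    · rw [hE 1]
      exact ⟨m - t, by push_cast; omega⟩
    · rintro j ⟨-, hj⟩
      rw [hE j] at hj
      rcases hj with ⟨k, hk⟩
      fin_cases j <;> simp_all <;> omega
end

section
/- Let R be a commutative ring, G a finite group, and M a left R[G]-module which is reflexive as an R-module (the natural map M → Hom_R(Hom_R(M,R), R) is an isomorphism). Then M is reflexive as an R[G]-module: the natural map M → Hom_{R[G]}(Hom_{R[G]}(M, R[G]), R[G]) is an isomorphism. -/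
section aux
variable (R : Type) [CommRing R] (G : Type) [Group G] [Fintype G]
    (M : Type) [AddCommGroup M] [Module R M] [Module (MonoidAlgebra R G) M]
    [IsScalarTower R (MonoidAlgebra R G) M]

/-- coefficient at 1, as an R-linear map -/
noncomputable def stmt16phi : MonoidAlgebra R G →ₗ[R] R where
  toFun a := a.coeff 1
  map_add' a b := rfl
  map_smul' r a := rfl

noncomputable def stmt16F (g : M →ₗ[R] R) :
    M →ₗ[MonoidAlgebra R G] MonoidAlgebra R G where
  toFun m := ∑ σ : G, MonoidAlgebra.single σ (g ((MonoidAlgebra.single σ⁻¹ (1:R)) • m))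
  map_add' m m' := by
    simp [smul_add, map_add, Finsupp.single_add, Finset.sum_add_distrib]
  map_smul' s m := by
    dsimp only [RingHom.id_apply]
    induction s using MonoidAlgebra.induction_on with
    | of τ =>
      simp only [MonoidAlgebra.of_apply, smul_eq_mul]
      rw [Finset.mul_sum]
      refine (Fintype.sum_equiv (Equiv.mulLeft τ) _ _ fun σ => ?_).symm
      rw [MonoidAlgebra.single_mul_single, one_mul, Equiv.coe_mulLeft, smul_smul,
        MonoidAlgebra.single_mul_single, mul_one, mul_inv_rev, inv_mul_cancel_right]
    | add s t hs ht =>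
      simp only [add_smul, smul_add, map_add, MonoidAlgebra.single_add,
        Finset.sum_add_distrib, RingHom.id_apply] at *
      rw [hs, ht]
    | smul r s hs =>
      have h1 : ∀ σ : G, (MonoidAlgebra.single σ⁻¹ (1:R) : MonoidAlgebra R G) • r • s • m
          = r • ((MonoidAlgebra.single σ⁻¹ (1:R) : MonoidAlgebra R G) • s • m) :=
        fun σ => smul_comm _ _ _
      simp only [smul_assoc, h1, map_smul, RingHom.id_apply, ← MonoidAlgebra.smul_single,
        ← Finset.smul_sum, hs]
end aux

section aux2
variable {R : Type} [CommRing R] {G : Type} [Group G] [Fintype G]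
    {M : Type} [AddCommGroup M] [Module R M] [Module (MonoidAlgebra R G) M]
    [IsScalarTower R (MonoidAlgebra R G) M]

lemma stmt16F_coe (g : M →ₗ[R] R) (m : M) (σ : G) :
    (stmt16F R G M g m).coeff σ = g ((MonoidAlgebra.single σ⁻¹ (1:R)) • m) := by
  classical
  show (∑ τ : G, (MonoidAlgebra.single τ (g ((MonoidAlgebra.single τ⁻¹ (1:R)) • m))
    : MonoidAlgebra R G)).coeff σ = _
  rw [MonoidAlgebra.coeff_sum, Finset.sum_apply']
  simp [MonoidAlgebra.coeff_single, Finsupp.single_apply]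

lemma stmt16F_eq (f : M →ₗ[MonoidAlgebra R G] MonoidAlgebra R G) :
    stmt16F R G M ((stmt16phi R G).comp (f.restrictScalars R)) = f := by
  refine LinearMap.ext fun m => MonoidAlgebra.ext <| Finsupp.ext fun σ => ?_
  rw [stmt16F_coe]
  show (f ((MonoidAlgebra.single σ⁻¹ (1:R)) • m)).coeff 1 = (f m).coeff σ
  rw [map_smul, smul_eq_mul, MonoidAlgebra.coeff_single_mul_apply, one_mul, inv_inv, mul_one]

lemma stmt16F_add (g g' : M →ₗ[R] R) :
    stmt16F R G M (g + g') = stmt16F R G M g + stmt16F R G M g' := by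
  refine LinearMap.ext fun m => MonoidAlgebra.ext <| Finsupp.ext fun σ => ?_
  rw [LinearMap.add_apply]
  show _ = (stmt16F R G M g m + stmt16F R G M g' m).coeff σ
  rw [MonoidAlgebra.coeff_add, Finsupp.add_apply, stmt16F_coe, stmt16F_coe, stmt16F_coe, LinearMap.add_apply]

lemma stmt16F_opsmul (r : R) (g : M →ₗ[R] R) :
    stmt16F R G M (r • g) =
      MulOpposite.op (MonoidAlgebra.single (1:G) r) • stmt16F R G M g := by
  refine LinearMap.ext fun m => MonoidAlgebra.ext <| Finsupp.ext fun σ => ?_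
  rw [LinearMap.smul_apply, MulOpposite.smul_eq_mul_unop, MulOpposite.unop_op,
    MonoidAlgebra.coeff_mul_single_apply, stmt16F_coe, stmt16F_coe, inv_one, mul_one,
    LinearMap.smul_apply, smul_eq_mul, mul_comm]

lemma stmt16phi_mul_single (a : MonoidAlgebra R G) (σ : G) :
    stmt16phi R G (a * MonoidAlgebra.single σ⁻¹ (1:R)) = a.coeff σ := by
  show (a * MonoidAlgebra.single σ⁻¹ (1:R)).coeff 1 = a.coeff σ
  rw [MonoidAlgebra.coeff_mul_single_apply, mul_one, one_mul, inv_inv]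

lemma stmt16phi_mul_single_one (a : MonoidAlgebra R G) (r : R) :
    stmt16phi R G (a * MonoidAlgebra.single (1:G) r) = r * stmt16phi R G a := by
  show (a * MonoidAlgebra.single (1:G) r).coeff 1 = r * a.coeff 1
  rw [MonoidAlgebra.coeff_mul_single_apply, inv_one, mul_one, mul_comm]

end aux2

/- STATEMENT 16: If M is a left R[G]-module (G finite, R commutative) which is reflexive as an
R-module, then M is reflexive as an R[G]-module: the evaluation map from M to the
R[G]-double dual Hom_{R[G]ᵒᵖ}(Hom_{R[G]}(M, R[G]), R[G]) is bijective. -/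
theorem stmt16 (R : Type) [CommRing R] (G : Type) [Group G] [Fintype G]
    (M : Type) [AddCommGroup M] [Module R M] [Module (MonoidAlgebra R G) M]
    [IsScalarTower R (MonoidAlgebra R G) M]
    [Module.IsReflexive R M] :
    Function.Bijective
      (fun x : M =>
        (⟨⟨fun f : M →ₗ[MonoidAlgebra R G] MonoidAlgebra R G => f x,
            fun _ _ => rfl⟩, fun _ _ => rfl⟩ :
          (M →ₗ[MonoidAlgebra R G] MonoidAlgebra R G) →ₗ[(MonoidAlgebra R G)ᵐᵒᵖ]
            MonoidAlgebra R G)) := by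
  constructor
  · intro x y h
    have h' : ∀ f : M →ₗ[MonoidAlgebra R G] MonoidAlgebra R G, f x = f y :=
      fun f => DFunLike.congr_fun h f
    apply (Module.bijective_dual_eval R M).injective
    refine LinearMap.ext fun g => ?_
    have := Finsupp.ext_iff.mp (congrArg MonoidAlgebra.coeff (h' (stmt16F R G M g))) (1 : G)
    rw [stmt16F_coe, stmt16F_coe] at this
    simpa [MonoidAlgebra.one_def.symm, Module.Dual.eval_apply] using this
  · intro Φ
    let Ψ : Module.Dual R (Module.Dual R M) :=
      { toFun := fun g => stmt16phi R G (Φ (stmt16F R G M g))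
        map_add' := fun g g' => by
          rw [stmt16F_add, map_add, map_add]
        map_smul' := fun r g => by
          dsimp only [RingHom.id_apply]
          rw [stmt16F_opsmul, map_smul, MulOpposite.smul_eq_mul_unop, MulOpposite.unop_op,
            stmt16phi_mul_single_one, smul_eq_mul] }
    set x := (Module.evalEquiv R M).symm Ψ with hxdef
    have hx : ∀ g : Module.Dual R M, g x = Ψ g := fun g =>
      Module.apply_evalEquiv_symm_apply R M g Ψ
    refine ⟨x, LinearMap.ext fun f => MonoidAlgebra.ext <| Finsupp.ext fun σ => ?_⟩
    show (f x).coeff σ = (Φ f).coeff σ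
    set f' := MulOpposite.op (MonoidAlgebra.single σ⁻¹ (1:R)) • f with hf'
    set g' := (stmt16phi R G).comp (f'.restrictScalars R) with hg'
    have key : g' x = Ψ g' := hx g'
    have h1 : Ψ g' = (Φ f).coeff σ := by
      show stmt16phi R G (Φ (stmt16F R G M g')) = _
      rw [hg', stmt16F_eq, hf', map_smul, MulOpposite.smul_eq_mul_unop, MulOpposite.unop_op,
        stmt16phi_mul_single]
    have h2 : g' x = (f x).coeff σ := by
      show stmt16phi R G (f' x) = _
      rw [hf', LinearMap.smul_apply, MulOpposite.smul_eq_mul_unop, MulOpposite.unop_op,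
        stmt16phi_mul_single]
    rw [← h2, key, h1]
end

section
/- Let Λ = ℤ_p[[Γ]] with Γ ≅ ℤ_p, and let W be a compact Λ-module such that W = lim←_r W/𝔞_r W where 𝔞_r is the r-th augmentation ideal. Then there is a canonical isomorphism Hom_Λ(W, Λ) ≅ lim←_r Hom_{Λ_r}(W/𝔞_r W, Λ_r), where Λ_r = Λ/𝔞_r. -/
/-- For an ideal `I` and a linear functional `F : W →ₗ Λ`, the submodule `I • W` is mapped
into `I`; this is what lets `F` descend to `W/I·W →ₗ Λ/I`. -/
lemma mapQ_cond {Λ : Type} [CommRing Λ] {W : Type} [AddCommGroup W] [Module Λ W]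
    (I : Ideal Λ) (F : W →ₗ[Λ] Λ) :
    (I • ⊤ : Submodule Λ W) ≤ Submodule.comap F I := by
  rw [Submodule.smul_le]
  intro r hr n _
  simp only [Submodule.mem_comap, map_smul, smul_eq_mul]
  exact I.mul_mem_right _ hr


section AuxStmt18

open PowerSeries Finset Filter

set_option maxHeartbeats 1000000

noncomputable def gg (p : ℕ) [Fact p.Prime] (k : ℕ) : PowerSeries ℤ_[p] :=
  (1 + PowerSeries.X) ^ (p ^ k) - 1


variable {p : ℕ} [Fact p.Prime]

lemma coeff_gg (k n : ℕ) :
    coeff (R := ℤ_[p]) n (gg p k) = if n = 0 then 0 else ((p ^ k).choose n : ℤ_[p]) := by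
  have h1 : (((1 + Polynomial.X : Polynomial ℤ_[p]) ^ (p ^ k) : Polynomial ℤ_[p]) :
      PowerSeries ℤ_[p]) = (1 + X) ^ (p ^ k) := by
    push_cast
    rfl
  rw [gg, map_sub, ← h1, Polynomial.coeff_coe, Polynomial.coeff_one_add_X_pow]
  rcases eq_or_ne n 0 with rfl | hn
  · simp
  · simp [hn, PowerSeries.coeff_one]

lemma dvd_choose_nat (k j m : ℕ) (hj : j ≠ 0) (hjm : j ≤ m) :
    p ^ (k - m) ∣ (p ^ k).choose j := by
  have hp : p.Prime := Fact.out
  rcases le_or_gt j (p ^ k) with hle | hlt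
  · apply pow_dvd_of_le_emultiplicity
    rw [hp.emultiplicity_choose_prime_pow hle hj]
    have h1 : multiplicity p j ≤ m := by
      have h2 : p ^ (multiplicity p j) ∣ j := pow_multiplicity_dvd p j
      have h3 : p ^ (multiplicity p j) ≤ j := Nat.le_of_dvd (Nat.pos_of_ne_zero hj) h2
      have h4 := Nat.lt_pow_self (n := multiplicity p j) hp.one_lt
      omega
    exact_mod_cast Nat.sub_le_sub_left h1 k
  · simp [Nat.choose_eq_zero_of_lt hlt]

lemma dvd_choose (k j m : ℕ) (hj : j ≠ 0) (hjm : j ≤ m) :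
    (p : ℤ_[p]) ^ (k - m) ∣ ((p ^ k).choose j : ℤ_[p]) := by
  have := dvd_choose_nat (p := p) k j m hj hjm
  exact_mod_cast Nat.cast_dvd_cast (α := ℤ_[p]) this

lemma coeff_mul_gg (k m n : ℕ) (h : PowerSeries ℤ_[p]) (hnm : n + m ≤ k) :
    (p : ℤ_[p]) ^ m ∣ coeff (R := ℤ_[p]) n (gg p k * h) := by
  rw [coeff_mul]
  apply Finset.dvd_sum
  rintro ⟨i, j⟩ hij
  rw [HasAntidiagonal.mem_antidiagonal] at hij
  rw [coeff_gg]
  rcases eq_or_ne i 0 with rfl | hi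
  · simp
  · simp only [hi, if_neg]
    have h1 : (p : ℤ_[p]) ^ (k - n) ∣ ((p ^ k).choose i : ℤ_[p]) :=
      dvd_choose k i n hi (by omega)
    have h2 : (p : ℤ_[p]) ^ m ∣ (p : ℤ_[p]) ^ (k - n) := pow_dvd_pow _ (by omega)
    exact (h2.trans h1).mul_right _

lemma norm_le_of_pow_dvd {x : ℤ_[p]} {m : ℕ} (h : (p : ℤ_[p]) ^ m ∣ x) :
    ‖x‖ ≤ (p : ℝ) ^ (-m : ℤ) := by
  rw [PadicInt.norm_le_pow_iff_mem_span_pow, Ideal.mem_span_singleton]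
  exact h

lemma hp1R : (1 : ℝ) < p := Nat.one_lt_cast.mpr (Fact.out (p := p.Prime)).one_lt

lemma pow_neg_eq (m : ℕ) : (p : ℝ) ^ (-m : ℤ) = ((p : ℝ)⁻¹) ^ m := by
  rw [zpow_neg, zpow_natCast, inv_pow]

lemma padic_sep {x : ℤ_[p]} (hx : ∀ m : ℕ, (p : ℤ_[p]) ^ m ∣ x) : x = 0 := by
  by_contra hne
  have hpos : 0 < ‖x‖ := norm_pos_iff.mpr hne
  obtain ⟨m, hm⟩ := exists_pow_lt_of_lt_one hpos (inv_lt_one_of_one_lt₀ (hp1R (p := p)))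
  have := norm_le_of_pow_dvd (hx m)
  rw [pow_neg_eq] at this
  linarith

lemma tendsto_pow_neg : Tendsto (fun m : ℕ => (p : ℝ) ^ (-m : ℤ)) atTop (nhds 0) := by
  simp_rw [pow_neg_eq]
  exact tendsto_pow_atTop_nhds_zero_of_lt_one (by positivity)
    (inv_lt_one_of_one_lt₀ (hp1R (p := p)))

lemma gg_sep {y : PowerSeries ℤ_[p]} (hy : ∀ k, gg p k ∣ y) : y = 0 := by
  ext n
  rw [map_zero]
  apply padic_sep
  intro m
  obtain ⟨h, rfl⟩ := hy (n + m)
  exact coeff_mul_gg (n + m) m n h le_rfl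

/-- The Weierstrass-type division estimate. -/
lemma div_estimate (k m N : ℕ) (h : PowerSeries ℤ_[p])
    (H : ∀ n ≤ N, (p : ℤ_[p]) ^ m ∣ coeff (R := ℤ_[p]) n (gg p k * h)) :
    ∀ c ≤ m, ∀ n, n + c * p ^ k ≤ N → (p : ℤ_[p]) ^ c ∣ coeff (R := ℤ_[p]) n h := by
  intro c
  induction c with
  | zero => intro _ n _; simp
  | succ c ih =>
    intro hcm n hn
    have hd : 0 < p ^ k := pow_pos (Fact.out (p := p.Prime)).pos k
    set d := p ^ k with hdd
    rw [add_mul, one_mul] at hn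
    -- the term (d, n) in the antidiagonal sum of coeff (n+d) (gg * h)
    have hmem : ((d, n) : ℕ × ℕ) ∈ antidiagonal (n + d) := by
      rw [HasAntidiagonal.mem_antidiagonal]; omega
    have hsum := Finset.add_sum_erase (antidiagonal (n + d))
      (fun q => coeff (R := ℤ_[p]) q.1 (gg p k) * coeff (R := ℤ_[p]) q.2 h) hmem
    have hgd : coeff (R := ℤ_[p]) d (gg p k) = 1 := by
      rw [coeff_gg, if_neg hd.ne', hdd, Nat.choose_self, Nat.cast_one]
    have hkey : coeff (R := ℤ_[p]) n h =
        coeff (R := ℤ_[p]) (n + d) (gg p k * h) -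
          ∑ q ∈ (antidiagonal (n + d)).erase (d, n),
            coeff (R := ℤ_[p]) q.1 (gg p k) * coeff (R := ℤ_[p]) q.2 h := by
      rw [coeff_mul, ← hsum]
      simp only [hgd, one_mul]
      ring
    rw [hkey]
    apply dvd_sub
    · exact (pow_dvd_pow _ hcm).trans (H (n + d) (by omega))
    · apply Finset.dvd_sum
      rintro ⟨i, j⟩ hij
      have hij2 := Finset.mem_of_mem_erase hij
      rw [HasAntidiagonal.mem_antidiagonal] at hij2
      have hne := Finset.ne_of_mem_erase hij
      rw [coeff_gg]
      rcases eq_or_ne i 0 with rfl | hi0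
      · simp
      rcases lt_trichotomy i d with hlt | rfl | hgt
      · -- 1 ≤ i < d : p ∣ gg_i and p^c ∣ h_j by ih
        simp only [hi0, if_neg]
        have hpg : (p : ℤ_[p]) ∣ ((p ^ k).choose i : ℤ_[p]) := by
          exact_mod_cast Nat.cast_dvd_cast (α := ℤ_[p])
            ((Fact.out (p := p.Prime)).dvd_choose_pow hi0 (by omega))
        have hpj : (p : ℤ_[p]) ^ c ∣ coeff (R := ℤ_[p]) j h :=
          ih (by omega) j (by omega)
        calc (p : ℤ_[p]) ^ (c + 1) = p ^ c * p := by ring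
        _ ∣ coeff (R := ℤ_[p]) j h * ((p ^ k).choose i : ℤ_[p]) := mul_dvd_mul hpj hpg
        _ = ((p ^ k).choose i : ℤ_[p]) * coeff (R := ℤ_[p]) j h := by ring
      · exact absurd (by omega : j = n) (by simpa using hne)
      · simp [hi0, Nat.choose_eq_zero_of_lt (show p ^ k < i from hgt)]

lemma hp1R' : (1 : ℝ) < p := Nat.one_lt_cast.mpr (Fact.out (p := p.Prime)).one_lt

lemma pow_mul_bound (n N : ℕ) :
    (p : ℝ) ^ (-(N - n : ℕ) : ℤ) ≤ (p : ℝ) ^ (n : ℤ) * (p : ℝ) ^ (-N : ℤ) := by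
  have hp0 : (0 : ℝ) < p := zero_lt_one.trans (hp1R' (p := p))
  rw [← zpow_add₀ hp0.ne']
  apply zpow_le_zpow_right₀ (le_of_lt (hp1R' (p := p)))
  omega

lemma key (f : ℕ → PowerSeries ℤ_[p]) (hf : ∀ k k', k ≤ k' → gg p k ∣ (f k' - f k)) :
    ∃ F : PowerSeries ℤ_[p], ∀ k, gg p k ∣ (F - f k) := by
  have hcau : ∀ n, CauchySeq (fun r => coeff (R := ℤ_[p]) n (f r)) := by
    intro n
    refine cauchySeq_of_le_tendsto_0 (fun N => (p : ℝ) ^ (n : ℤ) * (p : ℝ) ^ (-N : ℤ)) ?_ ?_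
    · intro r r' N hr hr'
      wlog hle : r' ≤ r generalizing r r'
      · rw [dist_comm]; exact this r' r hr' hr (le_of_not_ge hle)
      rw [dist_eq_norm]
      refine le_trans ?_ (pow_mul_bound n N)
      rw [← map_sub]
      rcases Nat.eq_zero_or_pos (N - n) with h0 | h0
      · rw [h0]; simpa using PadicInt.norm_le_one _
      · apply norm_le_of_pow_dvd
        obtain ⟨c, hc⟩ := hf r' r hle
        rw [hc]
        exact coeff_mul_gg r' (N - n) n c (by omega)
    · have := (tendsto_pow_neg (p := p)).const_mul ((p : ℝ) ^ (n : ℤ))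
      simpa using this
  choose L hL using fun n => cauchySeq_tendsto_of_complete (hcau n)
  refine ⟨PowerSeries.mk L, fun k => ?_⟩
  -- choose the quotient sequence
  have hq : ∀ r, ∃ c, k ≤ r → f r - f k = gg p k * c := by
    intro r
    by_cases hkr : k ≤ r
    · obtain ⟨c, hc⟩ := hf k r hkr; exact ⟨c, fun _ => hc⟩
    · exact ⟨0, fun h => absurd h hkr⟩
  choose hseq hspec using hq
  have hdpos : 0 < p ^ k := pow_pos (Fact.out (p := p.Prime)).pos k
  have hcau2 : ∀ n, CauchySeq (fun r => coeff (R := ℤ_[p]) n (hseq r)) := by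
    intro n
    refine cauchySeq_of_le_tendsto_0
      (fun N => (p : ℝ) ^ (-((N - (n + k)) / (p ^ k + 1) : ℕ) : ℤ)) ?_ ?_
    · intro r r' N hr hr'
      wlog hle : r' ≤ r generalizing r r'
      · rw [dist_comm]; exact this r' r hr' hr (le_of_not_ge hle)
      rw [dist_eq_norm, ← map_sub]
      set m := (N - (n + k)) / (p ^ k + 1) with hm
      show ‖coeff (R := ℤ_[p]) n (hseq r - hseq r')‖ ≤ (p : ℝ) ^ (-m : ℤ)
      rcases Nat.eq_zero_or_pos m with h0 | h0
      · rw [h0]; simpa using PadicInt.norm_le_one _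
      · have h1 : m * (p ^ k + 1) ≤ N - (n + k) := Nat.div_mul_le_self _ _
        have h2 : m * (p ^ k + 1) = m * p ^ k + m := by ring
        have hmN : n + m * p ^ k + m + k ≤ N := by omega
        have hkr' : k ≤ r' := by omega
        have hkr : k ≤ r := by omega
        apply norm_le_of_pow_dvd
        have hsub : gg p k * (hseq r - hseq r') = f r - f r' := by
          rw [mul_sub, ← hspec r hkr, ← hspec r' hkr']; ring
        have H : ∀ n' ≤ n + m * p ^ k,
            (p : ℤ_[p]) ^ m ∣ coeff (R := ℤ_[p]) n' (gg p k * (hseq r - hseq r')) := by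
          intro n' hn'
          rw [hsub]
          obtain ⟨c, hc⟩ := hf r' r hle
          rw [hc]
          exact coeff_mul_gg r' m n' c (by omega)
        exact div_estimate k m (n + m * p ^ k) _ H m le_rfl n le_rfl
    · apply (tendsto_pow_neg (p := p)).comp
      apply tendsto_atTop_atTop.mpr
      intro B
      refine ⟨n + k + B * (p ^ k + 1), fun N hN => ?_⟩
      rw [Nat.le_div_iff_mul_le (by omega : 0 < p ^ k + 1)]
      omega
  choose HL hHL using fun n => cauchySeq_tendsto_of_complete (hcau2 n)
  refine ⟨PowerSeries.mk HL, ?_⟩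
  ext n
  -- limit of coeff n (gg p k * hseq r)
  have T1 : Tendsto (fun r => coeff (R := ℤ_[p]) n (gg p k * hseq r)) atTop
      (nhds (coeff (R := ℤ_[p]) n (gg p k * PowerSeries.mk HL))) := by
    simp_rw [coeff_mul]
    apply tendsto_finset_sum
    rintro ⟨i, j⟩ _
    simp only [coeff_mk]
    exact (hHL j).const_mul _
  have T2 : Tendsto (fun r => coeff (R := ℤ_[p]) n (gg p k * hseq r)) atTop
      (nhds (coeff (R := ℤ_[p]) n (PowerSeries.mk L) - coeff (R := ℤ_[p]) n (f k))) := by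
    apply Filter.Tendsto.congr' (f₁ := fun r => coeff (R := ℤ_[p]) n (f r) - coeff (R := ℤ_[p]) n (f k))
    · filter_upwards [eventually_ge_atTop k] with r hkr
      rw [← hspec r hkr, map_sub]
    · simpa only [coeff_mk] using (hL n).sub tendsto_const_nhds
  have := tendsto_nhds_unique T1 T2
  rw [map_sub, this]

end AuxStmt18

set_option maxHeartbeats 2000000 in

/- STATEMENT 18: Λ = ℤ_p[[Γ]] ≅ ℤ_p[[T]] with Γ ≅ ℤ_p, augmentation ideals
𝔞_r = ((1+T)^{p^{r-2}} − 1), Λ_r = Λ/𝔞_r.  If W is a (compact) Λ-module with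
W = lim←_r W/𝔞_r W (expressed by injectivity into, and surjectivity onto, the compatible
families), then the canonical reduction map Hom_Λ(W, Λ) → lim←_r Hom_{Λ_r}(W/𝔞_r W, Λ_r)
is an isomorphism: it is injective, and every compatible family of reductions arises from
a unique Λ-linear functional on W. -/
theorem stmt18 (p : ℕ) [Fact p.Prime]
    (a : ℕ → Ideal (PowerSeries ℤ_[p]))
    (ha : ∀ r, a r =
      Ideal.span {(1 + PowerSeries.X : PowerSeries ℤ_[p]) ^ (p ^ (r - 2)) - 1})
    (W : Type) [AddCommGroup W] [Module (PowerSeries ℤ_[p]) W]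
    -- transition maps of the inverse system {W/𝔞_r W}
    (ρW : ∀ r s, s ≤ r →
      ((W ⧸ (a r • ⊤ : Submodule (PowerSeries ℤ_[p]) W)) →ₗ[PowerSeries ℤ_[p]]
        (W ⧸ (a s • ⊤ : Submodule (PowerSeries ℤ_[p]) W))))
    (hρW : ∀ r s (h : s ≤ r) (w : W),
      ρW r s h (Submodule.mkQ (a r • ⊤ : Submodule (PowerSeries ℤ_[p]) W) w)
        = Submodule.mkQ (a s • ⊤ : Submodule (PowerSeries ℤ_[p]) W) w)
    -- transition maps of the inverse system {Λ_r = Λ/𝔞_r}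
    (ρΛ : ∀ r s, s ≤ r →
      ((PowerSeries ℤ_[p] ⧸ a r) →ₗ[PowerSeries ℤ_[p]] (PowerSeries ℤ_[p] ⧸ a s)))
    (hρΛ : ∀ r s (h : s ≤ r) (x : PowerSeries ℤ_[p]),
      ρΛ r s h (Submodule.mkQ (a r : Submodule (PowerSeries ℤ_[p]) (PowerSeries ℤ_[p])) x)
        = Submodule.mkQ (a s : Submodule (PowerSeries ℤ_[p]) (PowerSeries ℤ_[p])) x)
    -- W = lim←_r W/𝔞_r W :
    (hWinj : Function.Injective
      (fun w : W => fun r => Submodule.mkQ (a r • ⊤ : Submodule (PowerSeries ℤ_[p]) W) w))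
    (hWsurj : ∀ g : ∀ r, W ⧸ (a r • ⊤ : Submodule (PowerSeries ℤ_[p]) W),
      (∀ r s (h : s ≤ r), 2 ≤ s → ρW r s h (g r) = g s) →
      ∃ w : W, ∀ r, 2 ≤ r →
        Submodule.mkQ (a r • ⊤ : Submodule (PowerSeries ℤ_[p]) W) w = g r) :
    -- conclusion: Hom_Λ(W,Λ) ≅ lim←_r Hom_{Λ_r}(W/𝔞_r W, Λ_r) via the reduction maps
    (∀ F F' : W →ₗ[PowerSeries ℤ_[p]] PowerSeries ℤ_[p],
      (∀ r, 2 ≤ r →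
        Submodule.mapQ (a r • ⊤ : Submodule (PowerSeries ℤ_[p]) W) (a r) F (mapQ_cond (a r) F)
          = Submodule.mapQ (a r • ⊤ : Submodule (PowerSeries ℤ_[p]) W) (a r) F'
              (mapQ_cond (a r) F')) → F = F') ∧
    (∀ g : ∀ r, (W ⧸ (a r • ⊤ : Submodule (PowerSeries ℤ_[p]) W)) →ₗ[PowerSeries ℤ_[p]]
        (PowerSeries ℤ_[p] ⧸ a r),
      (∀ r s (h : s ≤ r), 2 ≤ s → (ρΛ r s h).comp (g r) = (g s).comp (ρW r s h)) →
      ∃ F : W →ₗ[PowerSeries ℤ_[p]] PowerSeries ℤ_[p], ∀ r, 2 ≤ r →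
        Submodule.mapQ (a r • ⊤ : Submodule (PowerSeries ℤ_[p]) W) (a r) F (mapQ_cond (a r) F)
          = g r) := by
  have hga : ∀ r, a r = Ideal.span {gg p (r - 2)} := fun r => ha r
  -- separatedness of Λ with respect to the ideals a r
  have hsep0 : ∀ y : PowerSeries ℤ_[p], (∀ r, 2 ≤ r → y ∈ a r) → y = 0 := by
    intro y hy
    apply gg_sep
    intro k
    have h1 := hy (k + 2) (by omega)
    rw [hga] at h1
    rw [← Ideal.mem_span_singleton]
    simpa using h1
  constructor
  · -- injectivity
    intro F F' hFF'
    refine LinearMap.ext fun w => ?_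
    have h0 : F w - F' w = 0 := by
      apply hsep0
      intro r hr
      have h2 := congrArg
        (fun φ : (W ⧸ (a r • ⊤ : Submodule (PowerSeries ℤ_[p]) W)) →ₗ[PowerSeries ℤ_[p]]
            (PowerSeries ℤ_[p] ⧸ a r) =>
          φ (Submodule.Quotient.mk (p := (a r • ⊤ : Submodule (PowerSeries ℤ_[p]) W)) w))
        (hFF' r hr)
      simp only [Submodule.mapQ_apply] at h2
      exact (Submodule.Quotient.eq _).mp h2
    exact sub_eq_zero.mp h0
  · -- surjectivity
    intro gm hcomp
    have hxcompat : ∀ (w : W) r s (h : s ≤ r), 2 ≤ s →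
        ρΛ r s h (gm r (Submodule.mkQ _ w)) = gm s (Submodule.mkQ _ w) := by
      intro w r s h hs
      have h2 := congrArg
        (fun φ : (W ⧸ (a r • ⊤ : Submodule (PowerSeries ℤ_[p]) W)) →ₗ[PowerSeries ℤ_[p]]
            (PowerSeries ℤ_[p] ⧸ a s) =>
          φ (Submodule.mkQ (a r • ⊤ : Submodule (PowerSeries ℤ_[p]) W) w))
        (hcomp r s h hs)
      simp only [LinearMap.comp_apply] at h2
      rw [h2, hρW]
    have hlift : ∀ (w : W) (k : ℕ), ∃ y : PowerSeries ℤ_[p],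
        Submodule.mkQ (a (k + 2) : Submodule (PowerSeries ℤ_[p]) (PowerSeries ℤ_[p])) y
          = gm (k + 2) (Submodule.mkQ _ w) :=
      fun w k => Submodule.Quotient.mk_surjective _ _
    choose fseq hfseq using hlift
    have hfdvd : ∀ (w : W) k k', k ≤ k' → gg p k ∣ (fseq w k' - fseq w k) := by
      intro w k k' hk
      have h2 := hρΛ (k' + 2) (k + 2) (by omega) (fseq w k')
      have h1 : Submodule.mkQ (a (k + 2) : Submodule (PowerSeries ℤ_[p])
          (PowerSeries ℤ_[p])) (fseq w k') = gm (k + 2) (Submodule.mkQ _ w) := by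
        rw [← h2, hfseq w k', hxcompat w (k' + 2) (k + 2) (by omega) (by omega)]
      have h3 : fseq w k' - fseq w k ∈ a (k + 2) := by
        rw [← Submodule.ker_mkQ (a (k + 2) : Submodule (PowerSeries ℤ_[p])
          (PowerSeries ℤ_[p])), LinearMap.mem_ker, map_sub, h1, hfseq w k, sub_self]
      rw [hga (k + 2)] at h3
      rw [← Ideal.mem_span_singleton]
      simpa using h3
    choose F0 hF0 using fun w => key (fseq w) (hfdvd w)
    have hred : ∀ (w : W) r, 2 ≤ r →
        Submodule.mkQ (a r : Submodule (PowerSeries ℤ_[p]) (PowerSeries ℤ_[p])) (F0 w)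
          = gm r (Submodule.mkQ _ w) := by
      intro w r hr
      obtain ⟨k, rfl⟩ : ∃ k, r = k + 2 := ⟨r - 2, by omega⟩
      have h0 : F0 w - fseq w k ∈ (a (k + 2) : Submodule (PowerSeries ℤ_[p])
          (PowerSeries ℤ_[p])) := by
        rw [hga (k + 2), show k + 2 - 2 = k from by omega, Ideal.mem_span_singleton]
        exact hF0 w k
      have h1 : Submodule.mkQ (a (k + 2) : Submodule (PowerSeries ℤ_[p])
          (PowerSeries ℤ_[p])) (F0 w - fseq w k) = 0 := by
        rwa [← LinearMap.mem_ker, Submodule.ker_mkQ]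
      rw [map_sub] at h1
      have h2 : Submodule.mkQ (a (k + 2) : Submodule (PowerSeries ℤ_[p])
          (PowerSeries ℤ_[p])) (F0 w) = Submodule.mkQ _ (fseq w k) := by
        rw [← sub_eq_zero]; exact h1
      rw [h2, hfseq w k]
    have hmem0 : ∀ y : PowerSeries ℤ_[p],
        (∀ r, 2 ≤ r → Submodule.mkQ (a r : Submodule (PowerSeries ℤ_[p])
          (PowerSeries ℤ_[p])) y = 0) → y = 0 := by
      intro y hy
      apply hsep0
      intro r hr
      rw [← Submodule.ker_mkQ (a r : Submodule (PowerSeries ℤ_[p]) (PowerSeries ℤ_[p])),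
        LinearMap.mem_ker]
      exact hy r hr
    have hadd : ∀ w w', F0 (w + w') = F0 w + F0 w' := by
      intro w w'
      rw [← sub_eq_zero]
      apply hmem0
      intro r hr
      rw [map_sub, map_add, hred (w + w') r hr, hred w r hr, hred w' r hr, map_add, map_add]
      abel
    have hsmul : ∀ (c : PowerSeries ℤ_[p]) w, F0 (c • w) = c • F0 w := by
      intro c w
      rw [← sub_eq_zero]
      apply hmem0
      intro r hr
      rw [map_sub, map_smul, hred (c • w) r hr, hred w r hr, map_smul, map_smul, sub_self]
    refine ⟨{ toFun := F0, map_add' := hadd, map_smul' := hsmul }, ?_⟩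
    intro r hr
    apply Submodule.linearMap_qext
    refine LinearMap.ext fun w => ?_
    simp only [LinearMap.comp_apply, Submodule.mkQ_apply, Submodule.mapQ_apply,
      LinearMap.coe_mk, AddHom.coe_mk]
    exact hred w r hr
end
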